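/- arXiv:0904.3674 — 2 statements merged into one kernel-verified Lean document; each statement's English description precedes it below -/
import Mathlib

section
/- Let A be an associative k-algebra with |k| ≥ n+1, let a_1, …, a_m ∈ A, and let W be a k-subspace of A. If (α_1 a_1 + … + α_m a_m)^n ∈ W for all α_1, …, α_m ∈ k, then P_n(a_1,…,a_m) ⊆ W. -/
open Finset

section AuxLemmas

theorem sum_pow_words {M : Type*} [Semiring M] {m : ℕ} (f : Fin m → M) (n : ℕ) :
    (∑ j, f j) ^ n = ∑ w : Fin n → Fin m, ((List.ofFn w).map f).prod := by
  induction n with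
  | zero =>
    simp [Finset.sum_unique_nonempty]
  | succ n ih =>
    rw [pow_succ', ih, Finset.sum_mul_sum]
    rw [← (Fin.consEquiv (fun _ : Fin (n + 1) => Fin m)).sum_comp
      (fun w => ((List.ofFn w).map f).prod), Fintype.sum_prod_type]
    refine Finset.sum_congr rfl fun j _ => Finset.sum_congr rfl fun w _ => ?_
    simp [Fin.consEquiv, List.ofFn_succ, Fin.cons]

variable {k : Type*} [Field k] {A : Type*} [Ring A] [Algebra k A]

theorem list_smul_prod {m : ℕ} (α : Fin m → k) (a : Fin m → A) (l : List (Fin m)) :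
    ((l.map fun j => α j • a j)).prod = (l.map α).prod • (l.map a).prod := by
  induction l with
  | nil => simp
  | cons j l ih => simp [ih, smul_mul_smul_comm, smul_smul, mul_comm]

theorem count_sum_eq {m n : ℕ} (w : Fin n → Fin m) :
    ∑ j, (List.ofFn w).count j = n := by
  classical
  rw [← Finset.sum_subset (Finset.subset_univ (List.ofFn w).toFinset)]
  · simp [List.sum_toFinset_count_eq_length]
  · intro x _ hx
    simpa [List.count_eq_zero] using fun h => hx (List.mem_toFinset.2 h)

theorem prod_count {m : ℕ} (α : Fin m → k) {n : ℕ} (w : Fin n → Fin m) :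
    ((List.ofFn w).map α).prod = ∏ j, α j ^ (List.ofFn w).count j := by
  classical
  rw [Finset.prod_list_map_count,
    Finset.prod_subset (Finset.subset_univ (List.ofFn w).toFinset)]
  intro x _ hx
  have : (List.ofFn w).count x = 0 := by
    simpa [List.count_eq_zero] using fun h => hx (List.mem_toFinset.2 h)
  simp [this]

end AuxLemmas

/-- `pWord a i` is the polynomial `p_{i_1,…,i_m}(a_1,…,a_m)`: the sum, over all distinct
words in `m` letters containing exactly `i_j` occurrences of letter `j` for each `j`,
of the corresponding products of `a_1,…,a_m`. -/
noncomputable def pWord {A : Type*} [Ring A] {m : ℕ} (a : Fin m → A) (i : Fin m → ℕ) : A :=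
  ∑ w ∈ (Finset.univ : Finset (Fin (∑ j, i j) → Fin m)).filter
      (fun w => ∀ j, (List.ofFn w).count j = i j),
    ((List.ofFn w).map a).prod

/-- `Pdeg k a n` is `P_n(a_1,…,a_m)`, the `k`-span of
`{p_{i_1,…,i_m}(a_1,…,a_m) : i_1+…+i_m = n}`. -/
noncomputable def Pdeg (k : Type*) [Field k] {A : Type*} [Ring A] [Algebra k A]
    {m : ℕ} (a : Fin m → A) (n : ℕ) : Submodule k A :=
  Submodule.span k {x | ∃ i : Fin m → ℕ, (∑ j, i j) = n ∧ x = pWord a i}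

theorem pWord_eq_of_sum {A : Type*} [Ring A] {m : ℕ} (a : Fin m → A) (i : Fin m → ℕ)
    {n : ℕ} (hi : (∑ j, i j) = n) :
    pWord a i = ∑ w ∈ (Finset.univ : Finset (Fin n → Fin m)).filter
      (fun w => ∀ j, (List.ofFn w).count j = i j), ((List.ofFn w).map a).prod := by
  subst hi; rfl

theorem expand_pow {k : Type*} [Field k] {A : Type*} [Ring A] [Algebra k A]
    {m : ℕ} (α : Fin m → k) (a : Fin m → A) (n : ℕ) :
    (∑ j, α j • a j) ^ n
      = ∑ i ∈ Finset.Nat.antidiagonalTuple m n, (∏ j, α j ^ i j) • pWord a i := by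
  classical
  rw [sum_pow_words]
  rw [← Finset.sum_fiberwise_of_maps_to (g := fun w : Fin n → Fin m =>
        fun j => (List.ofFn w).count j)
      (fun w _ => Finset.Nat.mem_antidiagonalTuple.2 (count_sum_eq w))]
  refine Finset.sum_congr rfl fun i hi => ?_
  have hsum : (∑ j, i j) = n := Finset.Nat.mem_antidiagonalTuple.1 hi
  rw [pWord_eq_of_sum a i hsum, Finset.smul_sum]
  have hfilter : (Finset.univ : Finset (Fin n → Fin m)).filter
        (fun w => (fun j => (List.ofFn w).count j) = i)
      = (Finset.univ : Finset (Fin n → Fin m)).filter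
        (fun w => ∀ j, (List.ofFn w).count j = i j) := by
    apply Finset.filter_congr
    intro w _
    simp [funext_iff]
  rw [hfilter]
  refine Finset.sum_congr rfl fun w hw => ?_
  have hw' : ∀ j, (List.ofFn w).count j = i j := (Finset.mem_filter.1 hw).2
  rw [list_smul_prod, prod_count]
  congr 1
  exact Finset.prod_congr rfl fun j _ => by rw [hw' j]

theorem one_var_k {k : Type*} [Field k] {n : ℕ} (hcard : (n + 1 : Cardinal) ≤ Cardinal.mk k)
    (c : ℕ → k) (h : ∀ x : k, ∑ d ∈ Finset.range (n + 1), x ^ d * c d = 0) :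
    ∀ d ∈ Finset.range (n + 1), c d = 0 := by
  classical
  set P : Polynomial k := ∑ d ∈ Finset.range (n + 1), Polynomial.C (c d) * Polynomial.X ^ d
    with hP
  have hdeg : P.natDegree ≤ n := by
    apply Polynomial.natDegree_sum_le_of_forall_le
    intro d hd
    calc (Polynomial.C (c d) * Polynomial.X ^ d).natDegree ≤ d := by
          exact Polynomial.natDegree_C_mul_X_pow_le (c d) d
      _ ≤ n := Nat.lt_succ_iff.1 (Finset.mem_range.1 hd)
  have heval : ∀ x : k, P.eval x = 0 := by
    intro x
    rw [hP]
    simp only [Polynomial.eval_finset_sum, Polynomial.eval_mul, Polynomial.eval_C,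
      Polynomial.eval_pow, Polynomial.eval_X]
    simpa [mul_comm] using h x
  have hP0 : P = 0 := by
    apply Polynomial.eq_zero_of_forall_eval_zero_of_natDegree_lt_card _ heval
    calc (P.natDegree : Cardinal) ≤ n := by exact_mod_cast hdeg
      _ < n + 1 := by exact_mod_cast Nat.lt_succ_self n
      _ ≤ Cardinal.mk k := hcard
  intro d hd
  have : P.coeff d = c d := by
    rw [hP, Polynomial.finset_sum_coeff]
    rw [Finset.sum_eq_single d]
    · simp
    · intro b _ hb
      simp [Polynomial.coeff_C_mul, Polynomial.coeff_X_pow, Ne.symm hb]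
    · intro hd'; exact absurd hd hd'
  rw [← this, hP0, Polynomial.coeff_zero]

theorem one_var {k : Type*} [Field k] {V : Type*} [AddCommGroup V] [Module k V]
    {n : ℕ} (hcard : (n + 1 : Cardinal) ≤ Cardinal.mk k)
    (c : ℕ → V) (h : ∀ x : k, ∑ d ∈ Finset.range (n + 1), x ^ d • c d = 0) :
    ∀ d ∈ Finset.range (n + 1), c d = 0 := by
  intro d hd
  rw [← Module.forall_dual_apply_eq_zero_iff k]
  intro φ
  refine one_var_k hcard (fun d => φ (c d)) (fun x => ?_) d hd
  have := congrArg φ (h x)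
  simpa [map_sum] using this

theorem multi_var {k : Type*} [Field k] {V : Type*} [AddCommGroup V] [Module k V]
    {n : ℕ} (hcard : (n + 1 : Cardinal) ≤ Cardinal.mk k) :
    ∀ (m : ℕ) (S : Finset (Fin m → ℕ)), (∀ i ∈ S, ∀ j, i j ≤ n) →
      ∀ (c : (Fin m → ℕ) → V),
        (∀ α : Fin m → k, ∑ i ∈ S, (∏ j, α j ^ i j) • c i = 0) →
        ∀ i ∈ S, c i = 0 := by
  classical
  intro m
  induction m with
  | zero =>
    intro S _ c hc i hi
    have hS : S = {i} := by
      rw [Finset.eq_singleton_iff_unique_mem]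
      exact ⟨hi, fun x _ => Subsingleton.elim x i⟩
    have := hc (fun j => 1)
    rw [hS] at this
    simpa using this
  | succ m ih =>
    intro S hS c hc i hi
    have key : ∀ d ∈ Finset.range (n + 1), ∀ α' : Fin m → k,
        ∑ i ∈ S.filter (fun i => i 0 = d), (∏ j, α' j ^ i j.succ) • c i = 0 := by
      intro d hd α'
      refine one_var hcard
        (fun d => ∑ i ∈ S.filter (fun i => i 0 = d), (∏ j, α' j ^ i j.succ) • c i)
        (fun x => ?_) d hd
      have h1 := hc (Fin.cons x α')
      rw [← Finset.sum_fiberwise_of_maps_to (g := fun i : Fin (m+1) → ℕ => i 0)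
          (fun i hi => Finset.mem_range.2 (Nat.lt_succ_of_le (hS i hi 0)))] at h1
      rw [← h1]
      refine Finset.sum_congr rfl fun d _ => ?_
      rw [Finset.smul_sum]
      refine Finset.sum_congr rfl fun i hi' => ?_
      obtain ⟨hiS, hi0⟩ := Finset.mem_filter.1 hi'
      rw [Fin.prod_univ_succ, mul_smul, Fin.cons_zero, hi0]
      simp [Fin.cons_succ]
    -- now use IH on the tail
    have hd : i 0 ∈ Finset.range (n + 1) := Finset.mem_range.2 (Nat.lt_succ_of_le (hS i hi 0))
    set T : Finset (Fin m → ℕ) := (S.filter (fun x => x 0 = i 0)).image Fin.tail with hT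
    have htail : ∀ x ∈ S.filter (fun x => x 0 = i 0), ∀ y ∈ S.filter (fun x => x 0 = i 0),
        Fin.tail x = Fin.tail y → x = y := by
      intro x hx y hy hxy
      have hx0 := (Finset.mem_filter.1 hx).2
      have hy0 := (Finset.mem_filter.1 hy).2
      rw [← Fin.cons_self_tail x, ← Fin.cons_self_tail y, hx0, hy0, hxy]
    have hT' : ∀ i' ∈ T, ∀ j, i' j ≤ n := by
      intro i' hi' j
      obtain ⟨x, hx, rfl⟩ := Finset.mem_image.1 hi'
      exact hS x (Finset.mem_filter.1 hx).1 j.succ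
    have hc' : ∀ α' : Fin m → k,
        ∑ i' ∈ T, (∏ j, α' j ^ i' j) • c (Fin.cons (i 0) i') = 0 := by
      intro α'
      rw [hT, Finset.sum_image htail]
      rw [← key (i 0) hd α']
      refine Finset.sum_congr rfl fun x hx => ?_
      have hx0 := (Finset.mem_filter.1 hx).2
      rw [show Fin.cons (i 0) (Fin.tail x) = x by rw [← hx0]; exact Fin.cons_self_tail x]
      rfl
    have := ih T hT' (fun i' => c (Fin.cons (i 0) i')) hc' (Fin.tail i)
      (Finset.mem_image.2 ⟨i, Finset.mem_filter.2 ⟨hi, rfl⟩, rfl⟩)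
    simpa [Fin.cons_self_tail] using this

/-- If `|k| ≥ n+1`, `a_1,…,a_m ∈ A`, `W` is a `k`-subspace of `A`, and
`(α_1 a_1 + … + α_m a_m)^n ∈ W` for all `α_1,…,α_m ∈ k`, then `P_n(a_1,…,a_m) ⊆ W`. -/
theorem Pdeg_le_of_forall_pow_linear_mem
    (k : Type*) [Field k] (A : Type*) [Ring A] [Algebra k A]
    (m n : ℕ) (hcard : (n + 1 : Cardinal) ≤ Cardinal.mk k)
    (a : Fin m → A) (W : Submodule k A)
    (h : ∀ α : Fin m → k, (∑ j, α j • a j) ^ n ∈ W) :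
    Pdeg k a n ≤ W := by
  classical
  rw [Pdeg, Submodule.span_le]
  rintro x ⟨i, hsum, rfl⟩
  have hiS : i ∈ Finset.Nat.antidiagonalTuple m n := Finset.Nat.mem_antidiagonalTuple.2 hsum
  have hS : ∀ i' ∈ Finset.Nat.antidiagonalTuple m n, ∀ j, i' j ≤ n := by
    intro i' hi' j
    have := Finset.Nat.mem_antidiagonalTuple.1 hi'
    calc i' j ≤ ∑ j', i' j' := Finset.single_le_sum (fun _ _ => Nat.zero_le _) (Finset.mem_univ j)
      _ = n := this
  have hc : ∀ α : Fin m → k, ∑ i' ∈ Finset.Nat.antidiagonalTuple m n,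
      (∏ j, α j ^ i' j) • (W.mkQ (pWord a i')) = 0 := by
    intro α
    have h1 : W.mkQ ((∑ j, α j • a j) ^ n) = 0 := by
      rw [Submodule.mkQ_apply, Submodule.Quotient.mk_eq_zero]
      exact h α
    rw [expand_pow α a n, map_sum] at h1
    simpa [map_smul] using h1
  have := multi_var hcard m (Finset.Nat.antidiagonalTuple m n) hS
    (fun i' => W.mkQ (pWord a i')) hc i hiS
  have h0 : W.mkQ (pWord a i) = 0 := this
  rwa [Submodule.mkQ_apply, Submodule.Quotient.mk_eq_zero] at h0
end

section
/- Let A be a unital associative k-algebra with filtration {A_n}_{n≥0} and suppose every element of the Rees algebra R = ⊕_{n≥0} x^n A_n ⊆ A[x] is integral over k[x]. Then every element of gr(A)_{≥1} is nilpotent. -/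
open Polynomial Finset

section Aux
variable {k : Type*} [Field k] {A : Type*} [Ring A] [Algebra k A]

/-- membership in the Rees algebra -/
def InR (F : ℕ → Submodule k A) (p : Polynomial A) : Prop := ∀ n, p.coeff n ∈ F n

/-- membership in the shifted ideal -/
def InJ (F : ℕ → Submodule k A) (p : Polynomial A) : Prop :=
  p.coeff 0 = 0 ∧ ∀ n, p.coeff (n + 1) ∈ F n

variable {F : ℕ → Submodule k A} {p q : Polynomial A}

theorem InR.add (hp : InR F p) (hq : InR F q) : InR F (p + q) := by
  intro n; simpa [coeff_add] using (F n).add_mem (hp n) (hq n)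

theorem InR.smul (hp : InR F p) (c : k) : InR F (c • p) := by
  intro n; simpa [coeff_smul] using (F n).smul_mem c (hp n)

theorem InR.mul (hmulF : ∀ i j : ℕ, ∀ x ∈ F i, ∀ y ∈ F j, x * y ∈ F (i + j))
    (hp : InR F p) (hq : InR F q) : InR F (p * q) := by
  intro n
  rw [coeff_mul]
  refine (F n).sum_mem fun ij hij => ?_
  have h : ij.1 + ij.2 = n := mem_antidiagonal.mp hij
  exact h ▸ hmulF ij.1 ij.2 _ (hp ij.1) _ (hq ij.2)

theorem InR.pow (hmulF : ∀ i j : ℕ, ∀ x ∈ F i, ∀ y ∈ F j, x * y ∈ F (i + j))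
    (hp : InR F p) (m : ℕ) : InR F (p ^ (m + 1)) := by
  induction m with
  | zero => simpa using hp
  | succ m ih => rw [pow_succ]; exact ih.mul hmulF hp

theorem InR.sum {ι : Type*} {s : Finset ι} {f : ι → Polynomial A}
    (h : ∀ i ∈ s, InR F (f i)) : InR F (∑ i ∈ s, f i) := fun n => by
  rw [Polynomial.finset_sum_coeff]
  exact (F n).sum_mem fun i hi => h i hi n

theorem coeff_zero_pow (hp0 : p.coeff 0 = 0) (m : ℕ) : (p ^ (m + 1)).coeff 0 = 0 := by
  induction m with
  | zero => simpa using hp0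
  | succ m ih => rw [pow_succ, mul_coeff_zero, hp0, mul_zero]

theorem InJ.add (hp : InJ F p) (hq : InJ F q) : InJ F (p + q) := by
  refine ⟨by simp [hp.1, hq.1], fun n => ?_⟩
  simpa [coeff_add] using (F n).add_mem (hp.2 n) (hq.2 n)

theorem InJ.neg (hp : InJ F p) : InJ F (-p) := by
  refine ⟨by simp [hp.1], fun n => ?_⟩
  simpa [coeff_neg] using (F n).neg_mem (hp.2 n)

theorem InJ.smul (hp : InJ F p) (c : k) : InJ F (c • p) := by
  refine ⟨by simp [hp.1], fun n => ?_⟩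
  simpa [coeff_smul] using (F n).smul_mem c (hp.2 n)

theorem InJ.sum {ι : Type*} {s : Finset ι} {f : ι → Polynomial A}
    (h : ∀ i ∈ s, InJ F (f i)) : InJ F (∑ i ∈ s, f i) := by
  classical
  induction s using Finset.induction_on with
  | empty => exact ⟨by simp, fun n => by simp⟩
  | insert _ _ hx ih =>
    rw [Finset.sum_insert hx]
    exact (h _ (Finset.mem_insert_self _ _)).add
      (ih fun i hi => h i (Finset.mem_insert_of_mem hi))

theorem InJ.X_mul (hp : InR F p) : InJ F (X * p) := by
  constructor
  · simp [mul_coeff_zero]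
  · intro n; rw [coeff_X_mul]; exact hp n

/-- multiplying a Rees element by a scalar polynomial stays in Rees -/
theorem InR.scalar_mul (hmono : Monotone F) (hp : InR F p) (r : Polynomial k) :
    InR F (r.map (algebraMap k A) * p) := by
  intro n
  rw [coeff_mul]
  refine (F n).sum_mem fun ij hij => ?_
  have h : ij.1 + ij.2 = n := mem_antidiagonal.mp hij
  rw [coeff_map, ← Algebra.smul_def]
  exact (F n).smul_mem _ (hmono (by omega) (hp ij.2))

theorem scalar_decomp (r : Polynomial k) :
    r.map (algebraMap k A) * p
      = X * (r.divX.map (algebraMap k A) * p) + r.coeff 0 • p := by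
  conv_lhs => rw [← X_mul_divX_add r]
  rw [Polynomial.map_add, Polynomial.map_mul, map_X, map_C, add_mul, mul_assoc]
  congr 1
  ext n
  simp [coeff_C_mul, coeff_smul, Algebra.smul_def]

/-- the key killing lemma -/
theorem kill {s e : Polynomial A}
    (hmulF : ∀ i j : ℕ, ∀ x ∈ F i, ∀ y ∈ F j, x * y ∈ F (i + j))
    (hs : InR F s) (hs0 : s.coeff 0 = 0)
    (he : InR F e) (he0 : e.coeff 0 = 0)
    (h : InJ F (s + s * e)) : InJ F s := by
  refine ⟨hs0, fun n => ?_⟩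
  induction n using Nat.strong_induction_on with
  | _ n ih =>
    have h2 : s.coeff (n + 1) = (s + s * e).coeff (n + 1) - (s * e).coeff (n + 1) := by
      rw [coeff_add, add_sub_cancel_right]
    rw [h2]
    refine (F n).sub_mem (h.2 n) ?_
    rw [coeff_mul]
    refine (F n).sum_mem fun ij hij => ?_
    have hsum : ij.1 + ij.2 = n + 1 := mem_antidiagonal.mp hij
    rcases Nat.eq_zero_or_pos ij.1 with h1 | h1
    · rw [h1, hs0, zero_mul]; exact (F n).zero_mem
    rcases Nat.eq_zero_or_pos ij.2 with h2' | h2'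
    · rw [h2', he0, mul_zero]; exact (F n).zero_mem
    · obtain ⟨m, hm⟩ : ∃ m, ij.1 = m + 1 := ⟨ij.1 - 1, by omega⟩
      have hmem : s.coeff (m + 1) ∈ F m := ih m (by omega)
      have hprod := hmulF m ij.2 _ hmem _ (he ij.2)
      have heq : m + ij.2 = n := by omega
      rw [hm]
      exact heq ▸ hprod

/-- the main polynomial-level lemma -/
theorem nilmodJ (hmono : Monotone F)
    (hmulF : ∀ i j : ℕ, ∀ x ∈ F i, ∀ y ∈ F j, x * y ∈ F (i + j))
    (hint : ∀ p : Polynomial A, (∀ n : ℕ, p.coeff n ∈ F n) →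
      ∃ n : ℕ, 1 ≤ n ∧ ∃ q : ℕ → Polynomial k,
        p ^ n + ∑ i ∈ Finset.range n, (q i).map (algebraMap k A) * p ^ i = 0)
    (hp : InR F p) (hp0 : p.coeff 0 = 0) :
    ∃ M : ℕ, 1 ≤ M ∧ InJ F (p ^ M) := by
  classical
  obtain ⟨N, hN, q, hq⟩ := hint p hp
  set c : ℕ → k := fun i => (q i).coeff 0 with hc
  set j : ℕ → Polynomial A := fun i =>
    X * ((q i).divX.map (algebraMap k A) * p ^ (i + 1)) with hj
  have hInJj : ∀ i : ℕ, InJ F (j i) := fun i =>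
    InJ.X_mul ((InR.pow hmulF hp i).scalar_mul hmono ((q i).divX))
  have h1 : p ^ (N + 1) + ∑ i ∈ range N, (q i).map (algebraMap k A) * p ^ (i + 1) = 0 := by
    have h0 := congrArg (· * p) hq
    simpa [add_mul, Finset.sum_mul, mul_assoc, ← pow_succ] using h0
  have h3 : p ^ (N + 1) + ((∑ i ∈ range N, j i) + ∑ i ∈ range N, c i • p ^ (i + 1)) = 0 := by
    rw [← Finset.sum_add_distrib]
    have h2 : ∀ i ∈ range N, j i + c i • p ^ (i + 1)
        = (q i).map (algebraMap k A) * p ^ (i + 1) := fun i _ => (scalar_decomp (q i)).symm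
    rw [Finset.sum_congr rfl h2]
    exact h1
  by_cases hall : ∀ i, i < N → c i = 0
  · refine ⟨N + 1, by omega, ?_⟩
    have hz : ∑ i ∈ range N, c i • p ^ (i + 1) = 0 :=
      Finset.sum_eq_zero fun i hi => by rw [hall i (mem_range.mp hi), zero_smul]
    rw [hz, add_zero] at h3
    rw [eq_neg_of_add_eq_zero_left h3]
    exact (InJ.sum fun i _ => hInJj i).neg
  · push_neg at hall
    have hex : ∃ i, i < N ∧ c i ≠ 0 := hall
    obtain ⟨i0, hi0N, hc0, hmin'⟩ : ∃ i0, i0 < N ∧ c i0 ≠ 0 ∧ ∀ i, i < i0 → c i = 0 := by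
      refine ⟨Nat.find hex, (Nat.find_spec hex).1, (Nat.find_spec hex).2, fun i hi => ?_⟩
      by_contra hne
      exact Nat.find_min hex hi ⟨lt_trans hi (Nat.find_spec hex).1, hne⟩
    have hsplit : ∑ i ∈ range N, c i • p ^ (i + 1)
        = c i0 • p ^ (i0 + 1) + ∑ i ∈ Ico (i0 + 1) N, c i • p ^ (i + 1) := by
      rw [range_eq_Ico, ← Finset.sum_Ico_consecutive _ (Nat.zero_le i0) (le_of_lt hi0N)]
      have hz : ∑ i ∈ Ico 0 i0, c i • p ^ (i + 1) = 0 :=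
        Finset.sum_eq_zero fun i hi => by rw [hmin' i (mem_Ico.mp hi).2, zero_smul]
      rw [hz, zero_add, Finset.sum_eq_sum_Ico_succ_bot hi0N]
    have hNsplit : p ^ (N + 1) = p ^ (i0 + 1) * p ^ (N - i0) := by
      rw [← pow_add]; congr 1; omega
    have hterm : ∀ i ∈ Ico (i0 + 1) N,
        c i • p ^ (i + 1) = p ^ (i0 + 1) * (c i • p ^ (i - i0)) := by
      intro i hi
      have hii : (i0 + 1) + (i - i0) = i + 1 := by
        have := (mem_Ico.mp hi).1; omega
      rw [mul_smul_comm, ← pow_add, hii]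
    set w : Polynomial A := p ^ (N - i0) + ∑ i ∈ Ico (i0 + 1) N, c i • p ^ (i - i0) with hw
    have h4 : c i0 • p ^ (i0 + 1) + p ^ (i0 + 1) * w + ∑ i ∈ range N, j i = 0 := by
      have hmul : p ^ (i0 + 1) * w
          = p ^ (N + 1) + ∑ i ∈ Ico (i0 + 1) N, c i • p ^ (i + 1) := by
        rw [hw, mul_add, Finset.mul_sum, ← hNsplit]
        congr 1
        exact (Finset.sum_congr rfl hterm).symm
      rw [hmul]
      rw [hsplit] at h3
      rw [← h3]
      abel
    refine ⟨i0 + 1, by omega, ?_⟩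
    have hs : InR F (p ^ (i0 + 1)) := InR.pow hmulF hp i0
    have hs0 : (p ^ (i0 + 1)).coeff 0 = 0 := coeff_zero_pow hp0 i0
    obtain ⟨m, hm⟩ : ∃ m, N - i0 = m + 1 := ⟨N - i0 - 1, by omega⟩
    have hwR : InR F w := by
      rw [hw]
      refine InR.add (hm ▸ InR.pow hmulF hp m) ?_
      refine InR.sum fun i hi => ?_
      obtain ⟨t, ht⟩ : ∃ t, i - i0 = t + 1 := ⟨i - i0 - 1, by
        have := (mem_Ico.mp hi).1; omega⟩
      rw [ht]
      exact (InR.pow hmulF hp t).smul (c i)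
    have hw0 : w.coeff 0 = 0 := by
      rw [hw, coeff_add, hm, coeff_zero_pow hp0 m, zero_add, finset_sum_coeff]
      refine Finset.sum_eq_zero fun i hi => ?_
      obtain ⟨t, ht⟩ : ∃ t, i - i0 = t + 1 := ⟨i - i0 - 1, by
        have := (mem_Ico.mp hi).1; omega⟩
      rw [coeff_smul, ht, coeff_zero_pow hp0 t, smul_zero]
    set e : Polynomial A := (c i0)⁻¹ • w with hedef
    have heR : InR F e := hwR.smul _
    have he0 : e.coeff 0 = 0 := by rw [hedef, coeff_smul, hw0, smul_zero]
    have hJs : c i0 • p ^ (i0 + 1) + p ^ (i0 + 1) * w = -∑ i ∈ range N, j i :=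
      eq_neg_of_add_eq_zero_left h4
    have h5 : p ^ (i0 + 1) + p ^ (i0 + 1) * e
        = (-(c i0)⁻¹) • ∑ i ∈ range N, j i := by
      calc p ^ (i0 + 1) + p ^ (i0 + 1) * e
          = (c i0)⁻¹ • (c i0 • p ^ (i0 + 1) + p ^ (i0 + 1) * w) := by
            rw [hedef, mul_smul_comm, smul_add, smul_smul, inv_mul_cancel₀ hc0, one_smul]
        _ = (c i0)⁻¹ • (-∑ i ∈ range N, j i) := by rw [hJs]
        _ = (-(c i0)⁻¹) • ∑ i ∈ range N, j i := by rw [smul_neg, neg_smul]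
    have hRJ : InJ F ((-(c i0)⁻¹) • ∑ i ∈ range N, j i) :=
      (InJ.sum fun i _ => hInJj i).smul _
    exact kill hmulF hs hs0 heR he0 (h5 ▸ hRJ)

variable {B : Type*} [Ring B] [Algebra k B]

open Classical in
/-- the symbol map -/
noncomputable def Phi (F : ℕ → Submodule k A) (φ : ∀ n : ℕ, F n →ₗ[k] B)
    (p : Polynomial A) : B :=
  ∑ n ∈ range (p.natDegree + 1),
    if h : p.coeff n ∈ F n then φ n ⟨p.coeff n, h⟩ else 0

theorem Phi_eq (φ : ∀ n : ℕ, F n →ₗ[k] B) (hp : InR F p) {M : ℕ}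
    (hM : p.natDegree < M) :
    Phi F φ p = ∑ n ∈ range M, φ n ⟨p.coeff n, hp n⟩ := by
  classical
  rw [Phi]
  have h1 : ∀ n ∈ range (p.natDegree + 1),
      (if h : p.coeff n ∈ F n then φ n ⟨p.coeff n, h⟩ else 0) = φ n ⟨p.coeff n, hp n⟩ :=
    fun n _ => dif_pos (hp n)
  rw [Finset.sum_congr rfl h1]
  refine Finset.sum_subset (by simp; omega) fun n _ hn => ?_
  have hc : p.coeff n = 0 := by
    refine coeff_eq_zero_of_natDegree_lt ?_
    simp at hn; omega
  convert (φ n).map_zero using 2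
  exact Subtype.ext hc

theorem Phi_add (φ : ∀ n : ℕ, F n →ₗ[k] B) (hp : InR F p) (hq : InR F q) :
    Phi F φ (p + q) = Phi F φ p + Phi F φ q := by
  set M := max (p + q).natDegree (max p.natDegree q.natDegree) + 1 with hM
  have h1 : (p + q).natDegree < M := by rw [hM]; exact Nat.lt_succ_of_le (le_max_left _ _)
  have h2 : p.natDegree < M := by
    rw [hM]; exact Nat.lt_succ_of_le (le_trans (le_max_left _ _) (le_max_right _ _))
  have h3 : q.natDegree < M := by
    rw [hM]; exact Nat.lt_succ_of_le (le_trans (le_max_right _ _) (le_max_right _ _))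
  rw [Phi_eq φ (hp.add hq) h1, Phi_eq φ hp h2, Phi_eq φ hq h3, ← Finset.sum_add_distrib]
  refine Finset.sum_congr rfl fun n _ => ?_
  rw [← (φ n).map_add]
  congr 1

theorem Phi_mul (φ : ∀ n : ℕ, F n →ₗ[k] B)
    (hmulF : ∀ i j : ℕ, ∀ x ∈ F i, ∀ y ∈ F j, x * y ∈ F (i + j))
    (hmulφ : ∀ p q : ℕ, ∀ x : F p, ∀ y : F q,
      φ p x * φ q y = φ (p + q) ⟨(x : A) * (y : A), hmulF p q _ x.2 _ y.2⟩)
    (hp : InR F p) (hq : InR F q) :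
    Phi F φ (p * q) = Phi F φ p * Phi F φ q := by
  classical
  have hpq : InR F (p * q) := hp.mul hmulF hq
  have hdeg : (p * q).natDegree < p.natDegree + 1 + (q.natDegree + 1) :=
    lt_of_le_of_lt natDegree_mul_le (by omega)
  rw [Phi_eq φ hpq hdeg, Phi_eq φ hp (Nat.lt_succ_self _), Phi_eq φ hq (Nat.lt_succ_self _),
    Finset.sum_mul_sum]
  set f : ℕ × ℕ → B := fun ij =>
    φ (ij.1 + ij.2) ⟨p.coeff ij.1 * q.coeff ij.2,
      hmulF _ _ _ (hp ij.1) _ (hq ij.2)⟩ with hf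
  have hRHS : (∑ i ∈ range (p.natDegree + 1), ∑ jn ∈ range (q.natDegree + 1),
        φ i ⟨p.coeff i, hp i⟩ * φ jn ⟨q.coeff jn, hq jn⟩)
      = ∑ ij ∈ range (p.natDegree + 1) ×ˢ range (q.natDegree + 1), f ij := by
    rw [Finset.sum_product]
    exact Finset.sum_congr rfl fun i _ =>
      Finset.sum_congr rfl fun jn _ => hmulφ i jn _ _
  rw [hRHS]
  have hLHS : ∀ n : ℕ, φ n ⟨(p * q).coeff n, hpq n⟩ = ∑ ij ∈ antidiagonal n, f ij := by
    intro n
    set g : ℕ × ℕ → F n := fun ij =>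
      if h : ij.1 + ij.2 = n then
        ⟨p.coeff ij.1 * q.coeff ij.2, h ▸ hmulF _ _ _ (hp ij.1) _ (hq ij.2)⟩
      else 0 with hg
    have h1 : (⟨(p * q).coeff n, hpq n⟩ : F n) = ∑ ij ∈ antidiagonal n, g ij := by
      apply Subtype.ext
      rw [AddSubmonoidClass.coe_finset_sum]
      rw [show ((⟨(p * q).coeff n, hpq n⟩ : F n) : A) = (p * q).coeff n from rfl, coeff_mul]
      refine Finset.sum_congr rfl fun ij hij => ?_
      rw [hg]
      simp only [dif_pos (mem_antidiagonal.mp hij)]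
    rw [h1, map_sum]
    refine Finset.sum_congr rfl fun ij hij => ?_
    have hsum := mem_antidiagonal.mp hij
    subst hsum
    rw [hg]
    simp only [dif_pos]
    rfl
  rw [Finset.sum_congr rfl fun n _ => hLHS n]
  have hdisj : Set.PairwiseDisjoint
      (↑(range (p.natDegree + 1 + (q.natDegree + 1)))) (antidiagonal : ℕ → Finset (ℕ × ℕ)) := by
    intro a _ b _ hab
    refine Finset.disjoint_left.mpr fun x hxa hxb => hab ?_
    rw [← mem_antidiagonal.mp hxa, mem_antidiagonal.mp hxb]
  rw [← Finset.sum_biUnion hdisj]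
  refine (Finset.sum_subset ?_ ?_).symm
  · intro ij hij
    rw [Finset.mem_product, mem_range, mem_range] at hij
    rw [Finset.mem_biUnion]
    exact ⟨ij.1 + ij.2, mem_range.mpr (by omega), mem_antidiagonal.mpr rfl⟩
  · intro ij _ hij
    rw [Finset.mem_product, not_and_or] at hij
    have hzero : p.coeff ij.1 * q.coeff ij.2 = 0 := by
      rcases hij with h | h
      · have hz : p.coeff ij.1 = 0 :=
          coeff_eq_zero_of_natDegree_lt (by rw [mem_range] at h; omega)
        rw [hz, zero_mul]
      · have hz : q.coeff ij.2 = 0 :=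
          coeff_eq_zero_of_natDegree_lt (by rw [mem_range] at h; omega)
        rw [hz, mul_zero]
    rw [hf]
    convert (φ (ij.1 + ij.2)).map_zero using 2
    exact Subtype.ext hzero

theorem Phi_zero (φ : ∀ n : ℕ, F n →ₗ[k] B) : Phi F φ (0 : Polynomial A) = 0 := by
  refine Finset.sum_eq_zero fun n _ => ?_
  rw [dif_pos (by simp : (0 : Polynomial A).coeff n ∈ F n)]
  convert (φ n).map_zero using 2
  exact Subtype.ext (by simp)

theorem Phi_monomial (φ : ∀ n : ℕ, F n →ₗ[k] B) {m : ℕ} (a : F m) :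
    Phi F φ (monomial m (a : A)) = φ m a := by
  have hmem : InR F (monomial m (a : A)) := by
    intro n
    rw [coeff_monomial]
    split
    · next h => exact h ▸ a.2
    · exact (F n).zero_mem
  rw [Phi_eq φ hmem (lt_of_le_of_lt (natDegree_monomial_le _) (Nat.lt_succ_self m))]
  rw [Finset.sum_eq_single m]
  · congr 1
    exact Subtype.ext (by simp [coeff_monomial])
  · intro n _ hn
    convert (φ n).map_zero using 2
    refine Subtype.ext ?_
    show ((monomial m) (a : A)).coeff n = ((0 : F n) : A)
    rw [coeff_monomial, if_neg (fun h => hn h.symm)]; rfl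
  · intro h
    exact absurd (Finset.self_mem_range_succ m) h

theorem Phi_pow (φ : ∀ n : ℕ, F n →ₗ[k] B)
    (hmulF : ∀ i j : ℕ, ∀ x ∈ F i, ∀ y ∈ F j, x * y ∈ F (i + j))
    (hmulφ : ∀ p q : ℕ, ∀ x : F p, ∀ y : F q,
      φ p x * φ q y = φ (p + q) ⟨(x : A) * (y : A), hmulF p q _ x.2 _ y.2⟩)
    (hp : InR F p) (m : ℕ) :
    Phi F φ (p ^ (m + 1)) = (Phi F φ p) ^ (m + 1) := by
  induction m with
  | zero => rw [pow_one, pow_one]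
  | succ m ih =>
    rw [pow_succ p (m + 1), Phi_mul φ hmulF hmulφ (InR.pow hmulF hp m) hp, ih, ← pow_succ]

theorem Phi_eq_zero (φ : ∀ n : ℕ, F n →ₗ[k] B)
    (hker0 : ∀ x : F 0, φ 0 x = 0 ↔ (x : A) = 0)
    (hker : ∀ n : ℕ, ∀ x : F (n + 1), φ (n + 1) x = 0 ↔ (x : A) ∈ F n)
    (hp : InR F p) (hJ : InJ F p) : Phi F φ p = 0 := by
  rw [Phi_eq φ hp (Nat.lt_succ_self _)]
  refine Finset.sum_eq_zero fun n _ => ?_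
  cases n with
  | zero => exact (hker0 _).mpr hJ.1
  | succ m => exact (hker m _).mpr (hJ.2 m)

end Aux

/-- Let `A` be a unital associative `k`-algebra with filtration `{F_n}` and suppose every
element of the Rees algebra `R = ⊕_{n≥0} x^n F_n ⊆ A[x]` (the polynomials `p` with
`p.coeff n ∈ F_n` for all `n`) is integral over `k[x]`, i.e. satisfies
`p^n + q_{n−1}(x) p^{n−1} + ⋯ + q_0(x) = 0` for some `n ≥ 1` and `q_i(x) ∈ k[x]`.
Then every element of `gr(A)_{≥1}` is nilpotent.

The associated graded algebra `gr(A) = ⊕_{n≥0} F_n/F_{n−1}` (with `F_{−1} = 0`) is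
presented by an algebra `B` together with `k`-linear maps `φ n : F n → B` realizing the
quotient maps `F_n → F_n/F_{n−1} ⊆ gr(A)`: the kernel of `φ n` is exactly `F_{n-1}`
(with `φ 0` injective), and `φ p x * φ q y = φ (p+q) (x*y)`, which encodes the
multiplication of `gr(A)`.  The part `gr(A)_{≥1}` is then `⨆ n, range (φ (n+1))`. -/
theorem gr_nil_of_rees_integral
    (k : Type*) [Field k] (A : Type*) [Ring A] [Algebra k A]
    (F : ℕ → Submodule k A)
    (hmono : Monotone F)
    (hexh : ∀ a : A, ∃ n : ℕ, a ∈ F n)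
    (hmulF : ∀ i j : ℕ, ∀ x ∈ F i, ∀ y ∈ F j, x * y ∈ F (i + j))
    (hint : ∀ p : Polynomial A, (∀ n : ℕ, p.coeff n ∈ F n) →
      ∃ n : ℕ, 1 ≤ n ∧ ∃ q : ℕ → Polynomial k,
        p ^ n + ∑ i ∈ Finset.range n, (q i).map (algebraMap k A) * p ^ i = 0)
    (B : Type*) [Ring B] [Algebra k B]
    (φ : ∀ n : ℕ, F n →ₗ[k] B)
    (hker0 : ∀ x : F 0, φ 0 x = 0 ↔ (x : A) = 0)
    (hker : ∀ n : ℕ, ∀ x : F (n + 1), φ (n + 1) x = 0 ↔ (x : A) ∈ F n)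
    (hmulφ : ∀ p q : ℕ, ∀ x : F p, ∀ y : F q,
      φ p x * φ q y = φ (p + q) ⟨(x : A) * (y : A), hmulF p q _ x.2 _ y.2⟩) :
    ∀ b ∈ ⨆ n : ℕ, LinearMap.range (φ (n + 1)), IsNilpotent b := by
  intro b hb
  have key : ∃ p' : Polynomial A, InR F p' ∧ p'.coeff 0 = 0 ∧ Phi F φ p' = b := by
    refine Submodule.iSup_induction (motive := fun b : B =>
        ∃ p' : Polynomial A, InR F p' ∧ p'.coeff 0 = 0 ∧ Phi F φ p' = b)
      (fun n => LinearMap.range (φ (n + 1))) hb ?_ ?_ ?_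
    · rintro n x hx
      obtain ⟨a, rfl⟩ := LinearMap.mem_range.mp hx
      refine ⟨Polynomial.monomial (n + 1) (a : A), ?_, ?_, ?_⟩
      · intro m
        rw [Polynomial.coeff_monomial]
        split
        · next h => exact h ▸ a.2
        · exact (F m).zero_mem
      · rw [Polynomial.coeff_monomial]
        simp
      · exact Phi_monomial φ a
    · exact ⟨0, fun n => by simp, by simp, Phi_zero φ⟩
    · rintro x y ⟨px, hpx, hpx0, rfl⟩ ⟨py, hpy, hpy0, rfl⟩
      exact ⟨px + py, hpx.add hpy, by rw [Polynomial.coeff_add, hpx0, hpy0, add_zero],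
        Phi_add φ hpx hpy⟩
  obtain ⟨p, hpR, hp0, rfl⟩ := key
  obtain ⟨M, hM1, hMJ⟩ := nilmodJ hmono hmulF hint hpR hp0
  obtain ⟨m, rfl⟩ : ∃ m, M = m + 1 := ⟨M - 1, by omega⟩
  refine ⟨m + 1, ?_⟩
  rw [← Phi_pow φ hmulF hmulφ hpR m]
  exact Phi_eq_zero φ hker0 hker (InR.pow hmulF hpR m) hMJ
end
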